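/- For every integer d ≥ 2 and every λ > 0, (2/(d−2)!) · ∫₀^λ z^{d−2} G_λ(z) dz = λ^d / (2^d · Γ(d/2 + 1)²). -/

import Mathlib

open Real intervalIntegral

noncomputable def G (l z : ℝ) : ℝ :=
  (1 / Real.pi) * (Real.sqrt (l ^ 2 - z ^ 2) - z * Real.arccos (z / l))

noncomputable def K (n : ℕ) : ℝ := ∫ x in (0:ℝ)..(Real.pi/2), Real.cos x ^ n

lemma intG (n : ℕ) (l : ℝ) (hl : 0 < l) :
    ∫ z in (0:ℝ)..l, z ^ n * G l z =
      l ^ (n+2) / Real.pi * (K n - K (n+2) - K (n+2) / (n+2)) := by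
  have hgc : Continuous (fun z : ℝ => z ^ n * G l z) := by
    unfold G
    have h1 : Continuous fun z : ℝ => Real.sqrt (l ^ 2 - z ^ 2) :=
      Real.continuous_sqrt.comp (by fun_prop)
    have h2 : Continuous fun z : ℝ => z * Real.arccos (z / l) :=
      continuous_id.mul (Real.continuous_arccos.comp (by fun_prop))
    exact (continuous_pow n).mul (continuous_const.mul (h1.sub h2))
  have hsub := intervalIntegral.integral_comp_smul_deriv (a := Real.pi/2) (b := 0)
      (f := fun θ => l * Real.cos θ) (f' := fun θ => -(l * Real.sin θ))
      (g := fun z => z ^ n * G l z)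
      (fun x _ => by simpa [mul_comm] using (Real.hasDerivAt_cos x).const_mul l)
      (by fun_prop) hgc
  simp only [Function.comp, Real.cos_pi_div_two, Real.cos_zero, mul_zero, mul_one] at hsub
  rw [← hsub, intervalIntegral.integral_symm, ← intervalIntegral.integral_neg]
  have hcong : ∀ x ∈ Set.uIcc (0:ℝ) (Real.pi/2),
      -((-(l * Real.sin x)) • ((l * Real.cos x) ^ n * G l (l * Real.cos x)))
      = l ^ (n+2) / Real.pi *
        (Real.sin x ^ 2 * Real.cos x ^ n - x * (Real.sin x * Real.cos x ^ (n+1))) := by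
    intro x hx
    rw [Set.uIcc_of_le (by positivity : (0:ℝ) ≤ Real.pi/2)] at hx
    obtain ⟨hx0, hx1⟩ := hx
    have hxpi : x ≤ Real.pi := le_trans hx1 (by linarith [Real.pi_pos])
    have hs : Real.sqrt (l ^ 2 - (l * Real.cos x) ^ 2) = l * Real.sin x := by
      have h1 : l ^ 2 - (l * Real.cos x) ^ 2 = (l * Real.sin x) ^ 2 := by
        have := Real.sin_sq_add_cos_sq x; nlinarith
      rw [h1, Real.sqrt_sq
        (mul_nonneg hl.le (Real.sin_nonneg_of_nonneg_of_le_pi hx0 hxpi))]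
    have ha : Real.arccos (l * Real.cos x / l) = x := by
      rw [mul_div_cancel_left₀ _ hl.ne', Real.arccos_cos hx0 hxpi]
    unfold G
    rw [hs, ha]
    have hπ : Real.pi ≠ 0 := Real.pi_ne_zero
    field_simp
    have hππ : π * π⁻¹ = 1 := mul_inv_cancel₀ hπ
    linear_combination (l^2*l^n*Real.cos x^n*Real.sin x^2 - l^2*l^n*Real.cos x*Real.cos x^n*Real.sin x*x) * hππ
  rw [intervalIntegral.integral_congr hcong, intervalIntegral.integral_const_mul]
  have hI1 : IntervalIntegrable (fun x => Real.sin x ^ 2 * Real.cos x ^ n)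
      MeasureTheory.volume 0 (Real.pi/2) := (Continuous.intervalIntegrable (by fun_prop) _ _)
  have hI2 : IntervalIntegrable (fun x => x * (Real.sin x * Real.cos x ^ (n+1)))
      MeasureTheory.volume 0 (Real.pi/2) := (Continuous.intervalIntegrable (by fun_prop) _ _)
  rw [intervalIntegral.integral_sub hI1 hI2]
  have hA : (∫ x in (0:ℝ)..(Real.pi/2), Real.sin x ^ 2 * Real.cos x ^ n)
      = K n - K (n+2) := by
    have heq : ∀ x ∈ Set.uIcc (0:ℝ) (Real.pi/2),
        Real.sin x ^ 2 * Real.cos x ^ n = Real.cos x ^ n - Real.cos x ^ (n+2) := by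
      intro x _
      rw [Real.sin_sq]
      ring
    rw [intervalIntegral.integral_congr heq,
      intervalIntegral.integral_sub ((Continuous.intervalIntegrable (by fun_prop) _ _))
        ((Continuous.intervalIntegrable (by fun_prop) _ _))]
    unfold K
    try rfl
  have hB : (∫ x in (0:ℝ)..(Real.pi/2), x * (Real.sin x * Real.cos x ^ (n+1)))
      = K (n+2) / (n+2) := by
    have hu : ∀ x ∈ Set.uIcc (0:ℝ) (Real.pi/2), HasDerivAt (fun y : ℝ => y) 1 x :=
      fun x _ => hasDerivAt_id x
    have hv : ∀ x ∈ Set.uIcc (0:ℝ) (Real.pi/2),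
        HasDerivAt (fun y => -(Real.cos y ^ (n+2)) / (n+2))
          (Real.sin x * Real.cos x ^ (n+1)) x := by
      intro x _
      have h := (((Real.hasDerivAt_cos x).pow (n+2)).neg).div_const ((n:ℝ)+2)
      refine h.congr_deriv ?_
      have hn : ((n:ℝ)+2) ≠ 0 := by positivity
      push_cast
      field_simp
    have hIBP := intervalIntegral.integral_mul_deriv_eq_deriv_mul hu hv
      (Continuous.intervalIntegrable (by fun_prop) _ _)
      (Continuous.intervalIntegrable (by fun_prop) _ _)
    rw [hIBP]
    rw [Real.cos_pi_div_two, zero_pow (by omega), intervalIntegral.integral_const_mul,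
      intervalIntegral.integral_div, intervalIntegral.integral_neg]
    unfold K
    ring
  rw [hA, hB]

lemma Krec (n : ℕ) : K (n+2) = (n+1)/(n+2) * K n := by
  unfold K
  rw [integral_cos_pow]
  simp [Real.cos_pi_div_two, Real.sin_zero, zero_pow]

lemma K0 : K 0 = Real.pi / 2 := by simp [K]

lemma K1 : K 1 = 1 := by simp [K]

lemma Kval (n : ℕ) :
    K n = Real.pi * (Nat.factorial n) * (n+2)^2 /
      (2^(n+3) * Real.Gamma ((n:ℝ)/2 + 2)^2) := by
  induction n using Nat.strong_induction_on with
  | _ n ih =>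
    match n with
    | 0 =>
      rw [K0]
      norm_num [show ((0:ℕ):ℝ)/2 + 2 = 2 by norm_num, Real.Gamma_two]
      ring
    | 1 =>
      rw [K1]
      have h52 : Real.Gamma ((5:ℝ)/2) = 3/4 * Real.sqrt Real.pi := by
        have h1 : Real.Gamma ((1:ℝ)/2 + 1) = 1/2 * Real.sqrt Real.pi := by
          rw [Real.Gamma_add_one (by norm_num), Real.Gamma_one_half_eq]
        have : ((5:ℝ)/2) = (1/2 + 1) + 1 := by ring
        rw [this, Real.Gamma_add_one (by norm_num), h1]
        ring
      norm_num
      rw [h52]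
      have hπ : Real.sqrt Real.pi ^ 2 = Real.pi := Real.sq_sqrt Real.pi_pos.le
      field_simp [Nat.factorial]
      nlinarith [Real.pi_pos, hπ]
    | (m+2) =>
      rw [Krec, ih m (by omega)]
      have hG : Real.Gamma (((m:ℝ)+2)/2 + 2) = ((m:ℝ)/2 + 2) * Real.Gamma ((m:ℝ)/2 + 2) := by
        have : ((m:ℝ)+2)/2 + 2 = ((m:ℝ)/2 + 2) + 1 := by ring
        rw [this, Real.Gamma_add_one (by positivity)]
      have hGpos : 0 < Real.Gamma ((m:ℝ)/2 + 2) := Real.Gamma_pos_of_pos (by positivity)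
      push_cast [Nat.factorial, hG]
      have h2 : (0:ℝ) < 2 ^ (m+3) := by positivity
      field_simp
      ring

theorem stmt3 (d : ℕ) (hd : 2 ≤ d) (l : ℝ) (hl : 0 < l) :
    (2 / (Nat.factorial (d - 2) : ℝ)) * ∫ z in (0 : ℝ)..l, z ^ (d - 2) * G l z =
      l ^ d / (2 ^ d * (Real.Gamma ((d : ℝ) / 2 + 1)) ^ 2) := by
  obtain ⟨n, rfl⟩ := Nat.exists_eq_add_of_le hd
  have hd2 : 2 + n - 2 = n := by omega
  rw [hd2, intG n l hl]
  have hb : K n - K (n+2) - K (n+2) / ((n:ℝ)+2) = K n / ((n:ℝ)+2)^2 := by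
    rw [Krec]
    have : ((n:ℝ)+2) ≠ 0 := by positivity
    field_simp
    ring
  push_cast at hb ⊢
  rw [hb, Kval n]
  have hΓarg : ((2:ℝ)+(n:ℝ))/2 + 1 = (n:ℝ)/2 + 2 := by ring
  rw [hΓarg]
  have hΓ : 0 < Real.Gamma ((n:ℝ)/2 + 2) := Real.Gamma_pos_of_pos (by positivity)
  have hfac : (Nat.factorial n : ℝ) ≠ 0 := by positivity
  have hπ : Real.pi ≠ 0 := Real.pi_ne_zero
  have h2 : ((n:ℝ)+2) ≠ 0 := by positivity
  field_simp
  ring
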